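/- Every interior angle of an equilateral spherical triangle is strictly greater than π/3: if a, b, c are linearly independent unit vectors in EuclideanSpace ℝ (Fin 3) with ‖a − b‖ = ‖b − c‖ and ‖b − c‖ = ‖c − a‖, then the interior angle of the spherical triangle with vertices a, b, c at the vertex a (and hence, by symmetry, at each vertex) is strictly greater than π/3. -/
import Mathlib

open Real InnerProductGeometry
open scoped RealInnerProductSpace

set_option maxHeartbeats 1000000 in
/-- Every interior angle of an equilateral spherical triangle is strictly greater than `π / 3`. -/
theorem equilateral_spherical_triangle_angle_gt_pi_div_three
    (a b c : EuclideanSpace ℝ (Fin 3))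
    (ha : ‖a‖ = 1) (hb : ‖b‖ = 1) (hc : ‖c‖ = 1)
    (hli : LinearIndependent ℝ ![a, b, c])
    (hab : ‖a - b‖ = ‖b - c‖) (hbc : ‖b - c‖ = ‖c - a‖) :
    angle (b - ⟪a, b⟫ • a) (c - ⟪a, c⟫ • a) > π / 3 := by
  set t : ℝ := ⟪a, b⟫ with ht
  have hsq : ∀ x y : EuclideanSpace ℝ (Fin 3), ‖x‖ = 1 → ‖y‖ = 1 →
      ‖x - y‖ ^ 2 = 2 - 2 * ⟪x, y⟫ := by
    intro x y hx hy
    rw [@norm_sub_sq_real, hx, hy]; ring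
  have h1 : ⟪b, c⟫ = t := by
    have := congrArg (· ^ 2) hab
    simp only [hsq a b ha hb, hsq b c hb hc] at this
    linarith
  have h2 : ⟪c, a⟫ = t := by
    have := congrArg (· ^ 2) hbc
    simp only [hsq b c hb hc, hsq c a hc ha] at this
    linarith
  have h3 : ⟪a, c⟫ = t := by rw [real_inner_comm]; exact h2
  have hba : ⟪b, a⟫ = t := by rw [real_inner_comm]
  have hcb : ⟪c, b⟫ = t := by rw [real_inner_comm]; exact h1
  -- a ≠ b
  have hne : a ≠ b := by
    intro h
    have := hli.injective (show ![a, b, c] 0 = ![a, b, c] 1 by simpa using h)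
    simp at this
  have ht1 : t < 1 := by
    rcases lt_or_eq_of_le (real_inner_le_norm a b) with h | h
    · rw [ha, hb, mul_one] at h; exact h
    · exfalso
      apply hne
      rw [← inner_eq_one_iff_of_norm_eq_one (𝕜 := ℝ) ha hb]
      rw [ha, hb, mul_one] at h; exact h
  -- t > -1/2
  have hsum : ‖a + b + c‖ ^ 2 = 3 + 6 * t := by
    have : ‖a + b + c‖ ^ 2 = ⟪a + b + c, a + b + c⟫ :=
      (real_inner_self_eq_norm_sq _).symm
    rw [this]
    simp only [inner_add_left, inner_add_right, real_inner_self_eq_norm_sq,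
      ha, hb, hc, h1, h2, h3, hba, hcb, ← ht]
    ring
  have hsumne : a + b + c ≠ 0 := by
    intro h
    have h' : (∑ i, (fun _ : Fin 3 => (1 : ℝ)) i • ![a, b, c] i) = 0 := by
      simpa [Fin.sum_univ_three] using h
    have := (Fintype.linearIndependent_iff.mp hli) _ h' 0
    norm_num at this
  have ht2 : -1 / 2 < t := by
    rcases lt_or_eq_of_le (sq_nonneg ‖a + b + c‖) with h | h
    · rw [hsum] at h; linarith
    · exfalso
      apply hsumne
      rw [← norm_eq_zero]
      nlinarith [norm_nonneg (a + b + c)]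
  have htsq : t ^ 2 < 1 := by nlinarith
  have hta : ‖t • a‖ ^ 2 = t ^ 2 := by
    rw [norm_smul, ha, mul_one, Real.norm_eq_abs, sq_abs]
  -- inner products of tangent vectors
  have huv : ⟪b - t • a, c - t • a⟫ = t - t ^ 2 := by
    simp only [inner_sub_left, inner_sub_right, real_inner_smul_left,
      real_inner_smul_right, real_inner_self_eq_norm_sq, ha, h1, h3, hba, hta, ← ht]
    ring
  have hu : ‖b - t • a‖ ^ 2 = 1 - t ^ 2 := by
    rw [← real_inner_self_eq_norm_sq]
    simp only [inner_sub_left, inner_sub_right, real_inner_smul_left,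
      real_inner_smul_right, real_inner_self_eq_norm_sq, ha, hb, hba, hta, ← ht]
    ring
  have hv : ‖c - t • a‖ ^ 2 = 1 - t ^ 2 := by
    rw [← real_inner_self_eq_norm_sq]
    simp only [inner_sub_left, inner_sub_right, real_inner_smul_left,
      real_inner_smul_right, real_inner_self_eq_norm_sq, ha, hc, h2, h3, hta, ← ht]
    ring
  have hnu : ‖b - t • a‖ = Real.sqrt (1 - t ^ 2) := by
    rw [← hu, Real.sqrt_sq (norm_nonneg _)]
  have hnv : ‖c - t • a‖ = Real.sqrt (1 - t ^ 2) := by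
    rw [← hv, Real.sqrt_sq (norm_nonneg _)]
  have hprod : ‖b - t • a‖ * ‖c - t • a‖ = 1 - t ^ 2 := by
    rw [hnu, hnv, ← Real.sqrt_mul_self (by linarith : (0:ℝ) ≤ 1 - t ^ 2)]
    rw [Real.sqrt_mul_self (by linarith : (0:ℝ) ≤ 1 - t ^ 2)]
    exact Real.mul_self_sqrt (by linarith)
  have hangle : angle (b - ⟪a, b⟫ • a) (c - ⟪a, c⟫ • a)
      = Real.arccos ((t - t ^ 2) / (1 - t ^ 2)) := by
    rw [h3, ← ht, angle, huv, hprod]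
  rw [hangle]
  have hpi3 : π / 3 = Real.arccos (1 / 2) := by
    rw [← Real.cos_pi_div_three, Real.arccos_cos (by positivity)
      (by linarith [Real.pi_pos])]
  rw [hpi3]
  have hdenom : (0:ℝ) < 1 - t ^ 2 := by linarith
  have hrlt : (t - t ^ 2) / (1 - t ^ 2) < 1 / 2 := by
    rw [div_lt_iff₀ hdenom]
    nlinarith [sq_nonneg (1 - t)]
  have hrge : -1 ≤ (t - t ^ 2) / (1 - t ^ 2) := by
    rw [le_div_iff₀ hdenom]
    nlinarith
  have hrle : (t - t ^ 2) / (1 - t ^ 2) ≤ 1 := by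
    rw [div_le_one hdenom]; nlinarith
  exact Real.strictAntiOn_arccos ⟨hrge, hrle⟩ ⟨by norm_num, by norm_num⟩ hrlt
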